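/- For every prime p ≥ 5 and every positive integer n, setting q = p^n, there exists an integer a with 1 ≤ a < q and gcd(a, q) = 1 such that a/q has a finite simple continued fraction expansion a/q = [a_1, …, a_r] (each a_i a positive integer) with a_i ≤ p − 1 for all i. -/

import Mathlib

/-- The value of the finite simple continued fraction `1/(a₁ + 1/(a₂ + ⋯ + 1/aᵣ))`. -/
def cfVal : List ℕ → ℚ
  | [] => 0
  | a :: l => 1 / (a + cfVal l)

namespace ZarembaAux

/-- continuant (denominator) of a continued fraction word -/
def den : List ℕ → ℕ
  | [] => 1
  | [a] => a
  | a :: b :: L => a * den (b :: L) + den L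

/-- numerator -/
def num : List ℕ → ℕ
  | [] => 0
  | _ :: L => den L

/-- second-column continuant (drop-last continuant) -/
def alp : List ℕ → ℕ
  | [] => 0
  | [_] => 1
  | a :: b :: L => a * alp (b :: L) + alp L

def gam : List ℕ → ℕ
  | [] => 1
  | _ :: L => alp L

@[simp] lemma den_nil : den [] = 1 := rfl
@[simp] lemma num_nil : num [] = 0 := rfl
@[simp] lemma alp_nil : alp [] = 0 := rfl
@[simp] lemma gam_nil : gam [] = 1 := rfl
@[simp] lemma num_cons (a : ℕ) (L : List ℕ) : num (a :: L) = den L := rfl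
@[simp] lemma den_single (a : ℕ) : den [a] = a := rfl
@[simp] lemma num_single (a : ℕ) : num [a] = 1 := rfl
@[simp] lemma alp_single (a : ℕ) : alp [a] = 1 := rfl
@[simp] lemma gam_single (a : ℕ) : gam [a] = 0 := rfl
@[simp] lemma gam_cons (a : ℕ) (L : List ℕ) : gam (a :: L) = alp L := rfl

@[simp] lemma den_cons (a : ℕ) (L : List ℕ) : den (a :: L) = a * den L + num L := by
  cases L <;> simp [den, num]

@[simp] lemma alp_cons (a : ℕ) (L : List ℕ) : alp (a :: L) = a * alp L + gam L := by
  cases L <;> simp [alp, gam]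

lemma append_identities (u v : List ℕ) :
    den (u ++ v) = den u * den v + alp u * num v ∧
    num (u ++ v) = num u * den v + gam u * num v ∧
    alp (u ++ v) = den u * alp v + alp u * gam v ∧
    gam (u ++ v) = num u * alp v + gam u * gam v := by
  induction u with
  | nil => simp
  | cons a u ih =>
    obtain ⟨h1, h2, h3, h4⟩ := ih
    refine ⟨?_, ?_, ?_, ?_⟩ <;> simp [h1, h2, h3, h4] <;> ring

lemma den_append (u v : List ℕ) :
    den (u ++ v) = den u * den v + alp u * num v := (append_identities u v).1

lemma reverse_identities (u : List ℕ) :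
    den u.reverse = den u ∧ num u.reverse = alp u ∧
    alp u.reverse = num u ∧ gam u.reverse = gam u := by
  induction u with
  | nil => simp
  | cons a u ih =>
    obtain ⟨h1, h2, h3, h4⟩ := ih
    have e : (a :: u).reverse = u.reverse ++ [a] := by simp
    obtain ⟨g1, g2, g3, g4⟩ := append_identities u.reverse [a]
    rw [e]
    refine ⟨?_, ?_, ?_, ?_⟩
    · rw [g1, h1, h3]; simp; ring
    · rw [g2, h2, h4]; simp [mul_comm]
    · rw [g3, h1, h3]; simp
    · rw [g4, h2, h4]; simp

/-- key symmetric formula -/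
lemma den_sym (u v : List ℕ) :
    den (u ++ (v ++ u.reverse)) =
      den u * (den v * den u + alp v * alp u) +
        alp u * (num v * den u + gam v * alp u) := by
  obtain ⟨r1, r2, r3, r4⟩ := reverse_identities u
  rw [den_append u (v ++ u.reverse), den_append v u.reverse,
    (append_identities v u.reverse).2.1, r1, r2]

/-- folding step with t = 1 : squares the denominator -/
lemma fold_one (u : List ℕ) (k : ℕ) :
    den (u ++ ([k + 2, k] ++ u.reverse)) = (den u * (k + 1) + alp u) ^ 2 := by
  rw [den_sym]
  simp [den, num, alp, gam]
  ring

/-- folding step with t = d+1 : multiplies squared denominator by d+1 -/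
lemma fold_p (u : List ℕ) (k d : ℕ) :
    den (u ++ ([k + 1, d, 1, k] ++ u.reverse)) =
      (d + 1) * (den u * (k + 1) + alp u) ^ 2 := by
  rw [den_sym]
  simp [den, num, alp, gam]
  ring

lemma den_append_single (u : List ℕ) (b : ℕ) :
    den (u ++ [b]) = den u * b + alp u := by
  rw [den_append]; simp [den, num]

lemma den_pos {L : List ℕ} (h : ∀ x ∈ L, 0 < x) : 0 < den L := by
  induction L with
  | nil => simp
  | cons a L ih =>
    have ha : 0 < a := h a (by simp)
    have : 0 < den L := ih (fun x hx => h x (by simp [hx]))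
    simp only [den_cons]
    positivity

lemma gcd_num_den (L : List ℕ) : Nat.gcd (num L) (den L) = 1 := by
  induction L with
  | nil => simp
  | cons a L ih =>
    simp only [num_cons, den_cons]
    rw [Nat.gcd_comm (num L) (den L)] at ih
    rw [mul_comm, add_comm, Nat.gcd_add_mul_left_right, ih]

lemma cfVal_eq (L : List ℕ) (h : ∀ x ∈ L, 0 < x) :
    cfVal L = (num L : ℚ) / (den L : ℚ) := by
  induction L with
  | nil => simp [cfVal]
  | cons a L ih =>
    have ha : 0 < a := h a (by simp)
    have hd : 0 < den L := den_pos (fun x hx => h x (by simp [hx]))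
    have hd' : (den L : ℚ) ≠ 0 := by exact_mod_cast hd.ne'
    have ha' : (0:ℚ) < (a:ℚ) := by exact_mod_cast ha
    have hnum : (0:ℚ) ≤ (num L : ℚ) := by positivity
    have hden : (a:ℚ) * den L + num L ≠ 0 := by positivity
    rw [cfVal, ih (fun x hx => h x (by simp [hx]))]
    simp only [num_cons, den_cons]
    push_cast
    have h5 : (a : ℚ) + (num L : ℚ) / (den L : ℚ) ≠ 0 := by positivity
    field_simp

/-- main construction : for every `n ≥ 1` there is a word `c :: (t ++ [b])` with
controlled digits whose continuant is `p ^ n`. -/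
lemma zaremba_key (p : ℕ) (hp : p.Prime) (hp5 : 5 ≤ p) :
    ∀ n : ℕ, 0 < n → ∃ (t : List ℕ) (b c : ℕ),
      2 ≤ b ∧ b ≤ p - 2 ∧ 2 ≤ c ∧ c ≤ p - 2 ∧
      (∀ x ∈ t, 0 < x ∧ x ≤ p - 1) ∧
      den (c :: (t ++ [b])) = p ^ n := by
  intro n
  induction n using Nat.strong_induction_on with
  | _ n ih =>
  intro hn
  have hodd : p % 2 = 1 := by
    rcases hp.eq_two_or_odd with h | h <;> omega
  rcases eq_or_lt_of_le (show 1 ≤ n from hn) with h1 | h2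
  · -- n = 1
    refine ⟨[], (p - 1) / 2, 2, by omega, by omega, le_refl 2, by omega, by simp, ?_⟩
    rw [← h1]
    simp [den, num]
    omega
  · -- n ≥ 2
    rcases Nat.even_or_odd n with ⟨m, hm⟩ | ⟨m, hm⟩
    · -- n = m + m, m ≥ 1
      obtain ⟨t, b, c, hb2, hbp, hc2, hcp, ht, hden⟩ := ih m (by omega) (by omega)
      obtain ⟨k, rfl⟩ : ∃ k, b = k + 2 := ⟨b - 2, by omega⟩
      refine ⟨t ++ [k + 3, k + 1] ++ t.reverse, c, c, hc2, hcp, hc2, hcp, ?_, ?_⟩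
      · intro x hx
        simp only [List.mem_append, List.mem_cons, List.mem_reverse,
          List.not_mem_nil, or_false] at hx
        rcases hx with (hx | hx | hx) | hx
        · exact ht x hx
        · constructor <;> omega
        · constructor <;> omega
        · exact ht x hx
      · have e : c :: (t ++ [k + 3, k + 1] ++ t.reverse ++ [c]) =
            (c :: t) ++ ([(k + 1) + 2, k + 1] ++ (c :: t).reverse) := by
          simp [List.append_assoc]
        rw [e, fold_one]
        have e2 : den (c :: t) * (k + 1 + 1) + alp (c :: t) =
            den ((c :: t) ++ [k + 2]) := by
          rw [den_append_single]
        have e3 : (c :: t) ++ [k + 2] = c :: (t ++ [k + 2]) := by simp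
        rw [e2, e3, hden, hm]
        ring
    · -- n = 2 * m + 1, m ≥ 1
      obtain ⟨t, b, c, hb2, hbp, hc2, hcp, ht, hden⟩ := ih m (by omega) (by omega)
      obtain ⟨k, rfl⟩ : ∃ k, b = k + 2 := ⟨b - 2, by omega⟩
      refine ⟨t ++ [k + 2, p - 1, 1, k + 1] ++ t.reverse, c, c, hc2, hcp, hc2, hcp,
        ?_, ?_⟩
      · intro x hx
        simp only [List.mem_append, List.mem_cons, List.mem_reverse,
          List.not_mem_nil, or_false] at hx
        rcases hx with (hx | hx | hx | hx | hx) | hx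
        · exact ht x hx
        · constructor <;> omega
        · constructor <;> omega
        · constructor <;> omega
        · constructor <;> omega
        · exact ht x hx
      · have e : c :: (t ++ [k + 2, p - 1, 1, k + 1] ++ t.reverse ++ [c]) =
            (c :: t) ++ ([(k + 1) + 1, p - 1, 1, k + 1] ++ (c :: t).reverse) := by
          simp [List.append_assoc]
        rw [e, fold_p]
        have e2 : den (c :: t) * (k + 1 + 1) + alp (c :: t) =
            den ((c :: t) ++ [k + 2]) := by
          rw [den_append_single]
        have e3 : (c :: t) ++ [k + 2] = c :: (t ++ [k + 2]) := by simp
        have e4 : p - 1 + 1 = p := by omega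
        rw [e2, e3, hden, hm, e4]
        ring

end ZarembaAux

open ZarembaAux in
/-- For every prime `p ≥ 5` and `n ≥ 1`, with `q = p^n` there is `1 ≤ a < q`
coprime to `q` with all partial quotients of `a/q` at most `p - 1`. -/
theorem zaremba_prime_power (p : ℕ) (hp : p.Prime) (hp5 : 5 ≤ p) (n : ℕ) (hn : 0 < n) :
    ∃ a : ℕ, 1 ≤ a ∧ a < p ^ n ∧ Nat.gcd a (p ^ n) = 1 ∧
      ∃ L : List ℕ, (a : ℚ) / (p ^ n) = cfVal L ∧
        ∀ x ∈ L, 0 < x ∧ x ≤ p - 1 := by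
  obtain ⟨t, b, c, hb2, hbp, hc2, hcp, ht, hden⟩ := zaremba_key p hp hp5 n hn
  set w : List ℕ := c :: (t ++ [b]) with hw
  have hdigits : ∀ x ∈ w, 0 < x ∧ x ≤ p - 1 := by
    intro x hx
    simp only [hw, List.mem_cons, List.mem_append, List.mem_cons,
      List.not_mem_nil, or_false] at hx
    rcases hx with rfl | hx | rfl
    · constructor <;> omega
    · exact ht x hx
    · constructor <;> omega
  have hpos : ∀ x ∈ w, 0 < x := fun x hx => (hdigits x hx).1
  have htb : 0 < den (t ++ [b]) := by
    apply den_pos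
    intro x hx
    exact hpos x (by simp [hw, hx])
  refine ⟨num w, ?_, ?_, ?_, w, ?_, hdigits⟩
  · simp only [hw, num_cons]
    omega
  · rw [← hden]
    simp only [hw, num_cons, den_cons]
    nlinarith [htb, hc2]
  · rw [← hden]
    exact gcd_num_den w
  · rw [cfVal_eq w hpos]
    have hc : ((den w : ℕ) : ℚ) = (p : ℚ) ^ n := by rw [hden]; push_cast; ring
    rw [hc]
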